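/- For every s ∈ ℝ and every f ∈ L²(𝕋²), the X-ray transform is unitary from H^s(𝕋²) to H^s(𝕋² × Q) in the sense of the norm identity |f̂(0)|² + Σ_{k ∈ ℤ²\{0}} Σ_{v ∈ Q} ⟨k⟩^{2s} |\widehat{I_v f}(k)|² = Σ_{k ∈ ℤ²} ⟨k⟩^{2s} |f̂(k)|², where both sides may be infinite (and in particular \widehat{I_v f}(0) = f̂(0) for every v ∈ Q). -/

import Mathlib

noncomputable section
open MeasureTheory Real
open scoped ENNReal NNReal

instance : Fact ((0:ℝ) < 1) := ⟨one_pos⟩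

/-- The flat torus `𝕋ⁿ = ℝⁿ/ℤⁿ`, with the probability Haar (Lebesgue) measure. -/
abbrev Torus (n : ℕ) := Fin n → AddCircle (1:ℝ)

/-- The quotient map `π : ℝⁿ → 𝕋ⁿ`. -/
def tmap {n : ℕ} (x : Fin n → ℝ) : Torus n := fun i => (x i : AddCircle (1:ℝ))

/-- The character `x ↦ e^{2πi k·x}` on the torus. -/
def char {n : ℕ} (k : Fin n → ℤ) (x : Torus n) : ℂ := ∏ i, fourier (k i) (x i)

/-- The Fourier coefficient `f̂(k) = ∫ f(x) e^{−2πi k·x} dx`. -/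
def fCoeff {n : ℕ} (f : Torus n → ℂ) (k : Fin n → ℤ) : ℂ := ∫ x, char (-k) x * f x

/-- The X-ray transform on `𝕋²` in direction `v ∈ ℤ² \ {0}`:
`I_v f(x) = ∫₀¹ f(x + t v) dt`. -/
def xray (v : Fin 2 → ℤ) (f : Torus 2 → ℂ) (x : Torus 2) : ℂ :=
  ∫ t in (0:ℝ)..1, f (x + tmap fun i => t * (v i : ℝ))
/-- `⟨k⟩² = 1 + |k|²`. -/
def nrmSq (k : Fin 2 → ℤ) : ℝ := 1 + ((k 0 : ℝ)^2 + (k 1 : ℝ)^2)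

instance : IsProbabilityMeasure (volume : Measure (AddCircle (1:ℝ))) := ⟨by simp⟩

lemma char_norm {n : ℕ} (k : Fin n → ℤ) (x : Torus n) : ‖char k x‖ = 1 := by
  unfold char; rw [norm_prod]; simp [Circle.norm_coe]

lemma char_add {n : ℕ} (k : Fin n → ℤ) (x y : Torus n) :
    char k (x + y) = char k x * char k y := by
  unfold char
  rw [← Finset.prod_mul_distrib]
  refine Finset.prod_congr rfl fun i _ => ?_
  show fourier (k i) (x i + y i) = _
  rw [fourier_apply, fourier_apply, fourier_apply, smul_add, AddCircle.toCircle_add]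
  simp

lemma char_continuous {n : ℕ} (k : Fin n → ℤ) : Continuous (char k) :=
  continuous_finset_prod _ fun i _ => (fourier (k i)).continuous.comp (continuous_apply i)

lemma integral_char_mul_translate (k : Fin 2 → ℤ) (f : Torus 2 → ℂ) (c : Torus 2) :
    ∫ x, char k x * f (x + c) = char k (-c) * ∫ x, char k x * f x := by
  have h1 : ∀ x : Torus 2, char k x = char k (-c) * char k (x + c) := by
    intro x
    rw [← char_add]
    congr 1
    abel
  calc ∫ x, char k x * f (x + c)
      = ∫ x, char k (-c) * (char k (x + c) * f (x + c)) := by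
        refine integral_congr_ae (Filter.Eventually.of_forall fun x => ?_)
        simp only []
        rw [h1 x, mul_assoc]
    _ = char k (-c) * ∫ x, char k (x + c) * f (x + c) := integral_const_mul _ _
    _ = char k (-c) * ∫ x, char k x * f x := by
        rw [integral_add_right_eq_self (μ := (volume : Measure (Torus 2)))
          (fun y => char k y * f y) c]

lemma ioc_prob : ((volume : Measure ℝ).restrict (Set.Ioc (0:ℝ) 1)) Set.univ = 1 := by
  rw [Measure.restrict_apply_univ, Real.volume_Ioc]
  norm_num

instance : IsProbabilityMeasure ((volume : Measure ℝ).restrict (Set.Ioc (0:ℝ) 1)) :=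
  ⟨ioc_prob⟩

lemma tmap_continuous (v : Fin 2 → ℤ) :
    Continuous (fun t : ℝ => tmap fun i => t * (v i : ℝ)) := by
  unfold tmap
  exact continuous_pi fun i =>
    (AddCircle.continuous_mk' 1).comp (continuous_id.mul continuous_const)

lemma measurePreserving_shift (v : Fin 2 → ℤ) :
    MeasurePreserving (fun p : Torus 2 × ℝ => p.1 + tmap fun i => p.2 * (v i : ℝ))
      ((volume : Measure (Torus 2)).prod ((volume : Measure ℝ).restrict (Set.Ioc 0 1)))
      (volume : Measure (Torus 2)) := by
  set ν := (volume : Measure ℝ).restrict (Set.Ioc (0:ℝ) 1)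
  have hswap : MeasurePreserving Prod.swap ((volume : Measure (Torus 2)).prod ν)
      (ν.prod volume) := Measure.measurePreserving_swap
  have hshear : MeasurePreserving
      (fun p : ℝ × Torus 2 => (p.1, p.2 + tmap fun i => p.1 * (v i : ℝ)))
      (ν.prod volume) (ν.prod volume) := by
    have := MeasurePreserving.skew_product (μc := (volume : Measure (Torus 2)))
      (μd := (volume : Measure (Torus 2))) (MeasurePreserving.id ν)
      (g := fun t x => x + tmap fun i => t * (v i : ℝ)) ?_ ?_
    · exact this
    · exact measurable_snd.add (((tmap_continuous v).measurable).comp measurable_fst)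
    · exact Filter.Eventually.of_forall fun t =>
        (measurePreserving_add_right volume _).map_eq
  have hsnd : MeasurePreserving (Prod.snd : ℝ × Torus 2 → Torus 2)
      (ν.prod volume) volume := by
    refine ⟨measurable_snd, ?_⟩
    rw [Measure.map_snd_prod, ioc_prob, one_smul]
  exact hsnd.comp (hshear.comp hswap)

lemma char_neg_tmul (v k : Fin 2 → ℤ) (t : ℝ) :
    char (-k) (-(tmap fun i => t * (v i : ℝ)))
      = Complex.exp ((2 * π * Complex.I * ((k 0 * v 0 + k 1 * v 1 : ℤ) : ℂ)) * t) := by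
  have hneg : (-(tmap fun i => t * (v i : ℝ))) = tmap fun i => -(t * (v i : ℝ)) := by
    funext i
    show -((((t * (v i : ℝ)) : ℝ)) : AddCircle (1:ℝ)) = _
    norm_cast
  rw [hneg]
  unfold char tmap
  rw [Fin.prod_univ_two]
  rw [fourier_coe_apply, fourier_coe_apply, ← Complex.exp_add]
  congr 1
  simp only [Pi.neg_apply]
  push_cast
  ring

lemma fCoeff_xray_eq (f : Torus 2 → ℂ) (hf : Integrable f (volume : Measure (Torus 2)))
    (v k : Fin 2 → ℤ) :
    fCoeff (xray v f) k =
      if k 0 * v 0 + k 1 * v 1 = 0 then fCoeff f k else 0 := by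
  set ν := (volume : Measure ℝ).restrict (Set.Ioc (0:ℝ) 1) with hν
  set c : ℝ → Torus 2 := (fun t => tmap fun i => t * (v i : ℝ)) with hc
  have hint : Integrable (Function.uncurry fun (x : Torus 2) (t : ℝ) =>
      char (-k) x * f (x + c t)) ((volume : Measure (Torus 2)).prod ν) := by
    have h1 : Integrable (fun p : Torus 2 × ℝ => f (p.1 + c p.2))
        ((volume : Measure (Torus 2)).prod ν) :=
      ((measurePreserving_shift v).integrable_comp hf.aestronglyMeasurable).mpr hf
    refine h1.bdd_mul (c := 1) ?_ (Filter.Eventually.of_forall fun p => le_of_eq (char_norm _ _))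
    exact ((char_continuous (-k)).comp continuous_fst).aestronglyMeasurable
  have step1 : fCoeff (xray v f) k
      = ∫ x, ∫ t, char (-k) x * f (x + c t) ∂ν := by
    unfold fCoeff xray
    refine integral_congr_ae (Filter.Eventually.of_forall fun x => ?_)
    show char (-k) x * _ = _
    rw [intervalIntegral.integral_of_le zero_le_one]
    exact (integral_const_mul _ _).symm
  rw [step1, integral_integral_swap hint]
  have step2 : ∀ t : ℝ, ∫ x, char (-k) x * f (x + c t)
      = char (-k) (-(c t)) * fCoeff f k := fun t => by
    rw [integral_char_mul_translate (-k) f (c t)]; rfl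
  rw [integral_congr_ae (Filter.Eventually.of_forall step2)]
  rw [integral_mul_const]
  have step3 : ∀ t : ℝ, char (-k) (-(c t))
      = Complex.exp ((2 * π * Complex.I * ((k 0 * v 0 + k 1 * v 1 : ℤ) : ℂ)) * t) :=
    fun t => char_neg_tmul v k t
  rw [integral_congr_ae (Filter.Eventually.of_forall step3)]
  by_cases hm : k 0 * v 0 + k 1 * v 1 = 0
  · rw [if_pos hm, hm]
    simp
  · rw [if_neg hm]
    have hC : (2 * (π:ℂ) * Complex.I * ((k 0 * v 0 + k 1 * v 1 : ℤ) : ℂ)) ≠ 0 := by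
      apply mul_ne_zero
      · simpa [mul_assoc] using Complex.two_pi_I_ne_zero
      · exact_mod_cast hm
    have : (∫ t, Complex.exp ((2 * π * Complex.I *
        ((k 0 * v 0 + k 1 * v 1 : ℤ) : ℂ)) * t) ∂ν) = 0 := by
      rw [hν, ← intervalIntegral.integral_of_le zero_le_one,
        integral_exp_mul_complex hC]
      rw [show (2 * (π:ℂ) * Complex.I * ((k 0 * v 0 + k 1 * v 1 : ℤ) : ℂ)) * (1:ℝ)
          = ((k 0 * v 0 + k 1 * v 1 : ℤ) : ℂ) * (2 * π * Complex.I) by push_cast; ring]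
      rw [Complex.exp_int_mul_two_pi_mul_I]
      simp
    rw [this, zero_mul]

lemma unique_dir (Q : Set (Fin 2 → ℤ)) (hQ0 : ∀ v ∈ Q, v ≠ 0)
    (hQ : ∀ v : Fin 2 → ℤ, v ≠ 0 → ∃! q, q ∈ Q ∧ ∃ m : ℤ, v = m • q)
    (k : Fin 2 → ℤ) (hk : k ≠ 0) :
    ∃ q ∈ Q, (k 0 * q 0 + k 1 * q 1 = 0) ∧
      ∀ v ∈ Q, k 0 * v 0 + k 1 * v 1 = 0 → v = q := by
  have hkcase : k 0 ≠ 0 ∨ k 1 ≠ 0 := by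
    by_contra h
    push_neg at h
    exact hk (funext fun i => by fin_cases i <;> simp [h.1, h.2])
  set kp : Fin 2 → ℤ := ![-(k 1), k 0] with hkp
  have hkp0 : kp 0 = -(k 1) := rfl
  have hkp1 : kp 1 = k 0 := rfl
  have hkpne : kp ≠ 0 := by
    intro h
    rcases hkcase with h0 | h1
    · exact h0 (by simpa [hkp1] using congrFun h 1)
    · exact h1 (by simpa [hkp0, neg_eq_zero] using congrFun h 0)
  obtain ⟨q, ⟨hqQ, m, hm⟩, -⟩ := hQ kp hkpne
  have hmne : m ≠ 0 := by
    rintro rfl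
    exact hkpne (by simpa using hm)
  have hq0 : k 0 * kp 0 + k 1 * kp 1 = 0 := by rw [hkp0, hkp1]; ring
  have hqperp : k 0 * q 0 + k 1 * q 1 = 0 := by
    have h1 : kp 0 = m * q 0 := by rw [hm]; rfl
    have h2 : kp 1 = m * q 1 := by rw [hm]; rfl
    have : m * (k 0 * q 0 + k 1 * q 1) = 0 := by
      rw [← hq0, h1, h2]; ring
    exact (mul_eq_zero.mp this).resolve_left hmne
  refine ⟨q, hqQ, hqperp, fun v hvQ hvperp => ?_⟩
  have hqne : q ≠ 0 := hQ0 q hqQ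
  have hvne : v ≠ 0 := hQ0 v hvQ
  have hpar : v 0 * q 1 = v 1 * q 0 := by
    rcases hkcase with h0 | h1
    · have : k 0 * (v 0 * q 1 - v 1 * q 0) = 0 := by linear_combination q 1 * hvperp - v 1 * hqperp
      have := (mul_eq_zero.mp this).resolve_left h0
      linarith
    · have : k 1 * (v 0 * q 1 - v 1 * q 0) = 0 := by linear_combination (- q 0) * hvperp + v 0 * hqperp
      have := (mul_eq_zero.mp this).resolve_left h1
      linarith
  have hvcase : v 0 ≠ 0 ∨ v 1 ≠ 0 := by
    by_contra h
    push_neg at h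
    exact hvne (funext fun i => by fin_cases i <;> simp [h.1, h.2])
  rcases hvcase with hv0 | hv1
  · have hq0ne : q 0 ≠ 0 := by
      intro h
      have h1 : q 1 = 0 := by
        have := hpar
        rw [h, mul_zero] at this
        exact (mul_eq_zero.mp this).resolve_left hv0
      exact hqne (funext fun i => by fin_cases i <;> simp [h, h1])
    have hwne : (v 0 • q : Fin 2 → ℤ) ≠ 0 := by
      intro h
      have := congrFun h 0
      simp only [Pi.smul_apply, smul_eq_mul, Pi.zero_apply, mul_eq_zero] at this
      tauto
    obtain ⟨u, -, huu⟩ := hQ (v 0 • q) hwne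
    have h1 : q = u := huu q ⟨hqQ, v 0, rfl⟩
    have h2 : v = u := by
      refine huu v ⟨hvQ, q 0, ?_⟩
      funext i
      fin_cases i
      · show v 0 * q 0 = q 0 * v 0; ring
      · show v 0 * q 1 = q 0 * v 1
        rw [hpar]; ring
    rw [h2, ← h1]
  · have hq1ne : q 1 ≠ 0 := by
      intro h
      have h0 : q 0 = 0 := by
        have := hpar
        rw [h, mul_zero] at this
        exact (mul_eq_zero.mp this.symm).resolve_left hv1
      exact hqne (funext fun i => by fin_cases i <;> simp [h, h0])
    have hwne : (v 1 • q : Fin 2 → ℤ) ≠ 0 := by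
      intro h
      have := congrFun h 1
      simp only [Pi.smul_apply, smul_eq_mul, Pi.zero_apply, mul_eq_zero] at this
      tauto
    obtain ⟨u, -, huu⟩ := hQ (v 1 • q) hwne
    have h1 : q = u := huu q ⟨hqQ, v 1, rfl⟩
    have h2 : v = u := by
      refine huu v ⟨hvQ, q 1, ?_⟩
      funext i
      fin_cases i
      · show v 1 * q 0 = q 1 * v 0
        rw [← hpar]; ring
      · show v 1 * q 1 = q 1 * v 1; ring
    rw [h2, ← h1]


theorem xray_unitary_Hs
    (s : ℝ) (f : Torus 2 → ℂ) (hf : MemLp f 2 (volume : Measure (Torus 2)))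
    (Q : Set (Fin 2 → ℤ)) (hQ0 : ∀ v ∈ Q, v ≠ 0)
    (hQ : ∀ v : Fin 2 → ℤ, v ≠ 0 → ∃! q, q ∈ Q ∧ ∃ m : ℤ, v = m • q) :
    (∀ v ∈ Q, fCoeff (xray v f) 0 = fCoeff f 0) ∧
    (‖fCoeff f 0‖₊ : ℝ≥0∞) ^ 2 +
      ∑' (k : {k : Fin 2 → ℤ // k ≠ 0}) (v : Q),
        ENNReal.ofReal (nrmSq k.1 ^ s) * (‖fCoeff (xray v.1 f) k.1‖₊ : ℝ≥0∞) ^ 2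
      = ∑' (k : Fin 2 → ℤ),
        ENNReal.ofReal (nrmSq k ^ s) * (‖fCoeff f k‖₊ : ℝ≥0∞) ^ 2 := by
  have hfi : Integrable f (volume : Measure (Torus 2)) := hf.integrable one_le_two
  have key := fCoeff_xray_eq f hfi
  constructor
  · intro v hv
    rw [key v 0]
    simp
  · set g : (Fin 2 → ℤ) → ℝ≥0∞ :=
      fun k => ENNReal.ofReal (nrmSq k ^ s) * (‖fCoeff f k‖₊ : ℝ≥0∞) ^ 2 with hg
    have hterm : ∀ (k : {k : Fin 2 → ℤ // k ≠ 0}),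
        (∑' (v : Q), ENNReal.ofReal (nrmSq k.1 ^ s)
          * (‖fCoeff (xray v.1 f) k.1‖₊ : ℝ≥0∞) ^ 2) = g k.1 := by
      rintro ⟨k, hk⟩
      obtain ⟨q, hqQ, hqperp, huniq⟩ := unique_dir Q hQ0 hQ k hk
      rw [tsum_eq_single (⟨q, hqQ⟩ : Q) ?_]
      · rw [key q k, if_pos hqperp]
      · rintro ⟨v, hvQ⟩ hvne
        rw [key v k, if_neg, nnnorm_zero]
        · simp
        · intro h
          exact hvne (Subtype.ext (huniq v hvQ h))
    have h0 : g 0 = (‖fCoeff f 0‖₊ : ℝ≥0∞) ^ 2 := by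
      have : nrmSq 0 = 1 := by simp [nrmSq]
      rw [hg]
      simp only [this, Real.one_rpow, ENNReal.ofReal_one, one_mul]
    calc (‖fCoeff f 0‖₊ : ℝ≥0∞) ^ 2 +
        ∑' (k : {k : Fin 2 → ℤ // k ≠ 0}) (v : Q),
          ENNReal.ofReal (nrmSq k.1 ^ s) * (‖fCoeff (xray v.1 f) k.1‖₊ : ℝ≥0∞) ^ 2
        = g 0 + ∑' (k : {k : Fin 2 → ℤ // k ≠ 0}), g k.1 := by
          rw [h0, tsum_congr hterm]
      _ = (∑' (k : ↥({k : Fin 2 → ℤ | k ≠ 0}ᶜ)), g k.1)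
            + ∑' (k : ↥{k : Fin 2 → ℤ | k ≠ 0}), g k.1 := by
          have e1 : (∑' (k : ↥({k : Fin 2 → ℤ | k ≠ 0}ᶜ)), g k.1) = g 0 := by
            refine tsum_eq_single (⟨0, by simp⟩ : ↥({k : Fin 2 → ℤ | k ≠ 0}ᶜ)) ?_
            rintro ⟨b, hb⟩ hbne
            exact absurd (Subtype.ext (by simpa using hb)) hbne
          have e2 : (∑' (k : {k : Fin 2 → ℤ // k ≠ 0}), g k.1)
              = ∑' (k : ↥{k : Fin 2 → ℤ | k ≠ 0}), g k.1 := rfl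
          rw [e2, e1]
      _ = ∑' (k : Fin 2 → ℤ), g k := by
          rw [add_comm]
          exact Summable.tsum_add_tsum_compl ENNReal.summable ENNReal.summable
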